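/- Let C = Φ(𝒞) be a Z2Z4-linear code of binary length n = α+2β, where 𝒞 is a Z2Z4-additive code of type (α,β;γ,δ;κ), and set s = β−(γ−κ)−δ. Then: if s = 0, ker(C) = γ+2δ; if s = 1, ker(C) = γ+2δ−k̄ for some even integer k̄ with 0 ≤ k̄ ≤ 2⌈(δ−1)/2⌉; and if s ≥ 2, ker(C) ∈ {γ+δ, γ+δ+1, …, γ+2δ−2} ∪ {γ+2δ}. -/
import Mathlib


/-- The ambient group `Z2^α × Z4^β`, with componentwise ring structure
(so `u * v` is the componentwise product). -/
abbrev Amb (α β : ℕ) := (Fin α → ZMod 2) × (Fin β → ZMod 4)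

/-- The binary space `Z2^α × (Z2²)^β ≅ Z2^(α+2β)`. -/
abbrev Bin (α β : ℕ) := (Fin α → ZMod 2) × (Fin β → ZMod 2 × ZMod 2)

/-- The Gray map `φ : Z4 → Z2²` with `φ(0)=(0,0), φ(1)=(0,1), φ(2)=(1,1), φ(3)=(1,0)`. -/
def grayPair (y : ZMod 4) : ZMod 2 × ZMod 2 :=
  match y.val with
  | 0 => (0, 0)
  | 1 => (0, 1)
  | 2 => (1, 1)
  | _ => (1, 0)

/-- The extended Gray map `Φ : Z2^α × Z4^β → Z2^(α+2β)`. -/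
def Phi {α β : ℕ} (u : Amb α β) : Bin α β :=
  (u.1, fun i => grayPair (u.2 i))

/-- The kernel `K(C) = {x | x + C = C}` of a binary code. -/
def kernelK {α β : ℕ} (C : Set (Bin α β)) : Set (Bin α β) :=
  {x | (fun y => x + y) '' C = C}

/-- The rank of a binary code: the `Z2`-dimension of its linear span. -/
noncomputable def rankOf {α β : ℕ} (C : Set (Bin α β)) : ℕ :=
  Module.finrank (ZMod 2) (Submodule.span (ZMod 2) C)

/-- The dimension of the kernel of a binary code. -/
noncomputable def kerDim {α β : ℕ} (C : Set (Bin α β)) : ℕ :=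
  Module.finrank (ZMod 2) (Submodule.span (ZMod 2) (kernelK C))

/-- A `Z2Z4`-additive code `C ⊆ Z2^α × Z4^β` is of type `(α,β;γ,δ;κ)`:
`|C| = 2^(γ+2δ)`, the number of elements `x` with `2x = 0` is `2^(γ+δ)`, and `κ` is the
`Z2`-dimension of the projection onto the first `α` coordinates of `{x ∈ C | 2x = 0}`. -/
def IsTypeOf (α β γ δ κ : ℕ) (C : AddSubgroup (Amb α β)) : Prop :=
  Nat.card C = 2 ^ (γ + 2 * δ) ∧
  Nat.card {x : Amb α β | x ∈ C ∧ 2 • x = 0} = 2 ^ (γ + δ) ∧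
  Module.finrank (ZMod 2)
    (Submodule.span (ZMod 2) (Prod.fst '' {x : Amb α β | x ∈ C ∧ 2 • x = 0})) = κ

section DecideFacts

lemma zzd1 : ∀ a : ZMod 2, a + a + (a + a) = 0 := by decide
lemma zzd2 : ∀ a : ZMod 4, a + a + (a + a) = 0 := by decide
lemma zzd3 : ∀ a b : ZMod 2, a + b + (a * b + a * b) = a + b := by decide
lemma zzd4 : ∀ a : ZMod 2, -a = a := by decide
lemma zzd5 : ∀ a : ZMod 2 × ZMod 2, -a = a := by decide
lemma zzd6 : ∀ a : ZMod 2, a * a + a * a = a + a := by decide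
lemma zzd7 : ∀ a : ZMod 4, a * a + a * a = a + a := by decide
lemma zzd8 : ∀ a : ZMod 2, a + a = 0 := by decide

end DecideFacts

section Basic
variable {α β : ℕ}

lemma gray_add (a b : ZMod 4) :
    grayPair a + grayPair b = grayPair (a + b + 2 • (a * b)) := by
  rw [two_smul]; revert a b; decide

lemma gray_inj : Function.Injective grayPair := by
  intro a b; revert a b; decide

lemma Phi_zero : Phi (0 : Amb α β) = 0 := by
  unfold Phi
  refine Prod.ext rfl (funext fun i => ?_)
  show grayPair 0 = 0
  decide

lemma Phi_inj : Function.Injective (Phi (α := α) (β := β)) := by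
  intro x y hxy
  have h1 := congrArg Prod.fst hxy
  have h2 := congrArg Prod.snd hxy
  refine Prod.ext h1 (funext fun i => gray_inj ?_)
  exact congrFun h2 i

lemma Phi_add (x y : Amb α β) : Phi x + Phi y = Phi (x + y + 2 • (x * y)) := by
  unfold Phi
  refine Prod.ext (funext fun i => ?_) (funext fun i => ?_)
  · show x.1 i + y.1 i = ((x + y + 2 • (x * y)).1) i
    simp only [Prod.fst_add, Prod.smul_fst, Prod.fst_mul, Pi.add_apply, Pi.smul_apply,
      Pi.mul_apply]
    rw [two_smul]
    exact (zzd3 _ _).symm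
  · show grayPair (x.2 i) + grayPair (y.2 i) = grayPair (((x + y + 2 • (x * y)).2) i)
    simp only [Prod.snd_add, Prod.smul_snd, Prod.snd_mul, Pi.add_apply, Pi.smul_apply,
      Pi.mul_apply]
    exact gray_add _ _

/-- Negation is the identity on `Bin`. -/
lemma bin_neg (u : Bin α β) : -u = u := by
  refine Prod.ext (funext fun i => ?_) (funext fun i => ?_)
  · exact zzd4 _
  · exact zzd5 _

lemma bin_add_self (u : Bin α β) : u + u = 0 := by
  nth_rewrite 2 [← bin_neg u]
  exact add_neg_cancel u

lemma amb_two_two (z : Amb α β) : 2 • (2 • z) = 0 := by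
  refine Prod.ext (funext fun i => ?_) (funext fun i => ?_)
  · show 2 • (2 • (z.1 i)) = 0
    rw [two_smul, two_smul]; exact zzd1 _
  · show 2 • (2 • (z.2 i)) = 0
    rw [two_smul, two_smul]; exact zzd2 _

lemma two_smul_mul (x y : Amb α β) : 2 • (x * y) = (2 • x) * y := by
  rw [two_smul, two_smul, add_mul]

lemma two_smul_mul_self (x : Amb α β) : 2 • (x * x) = 2 • x := by
  refine Prod.ext (funext fun i => ?_) (funext fun i => ?_)
  · show 2 • ((x.1 i) * (x.1 i)) = 2 • (x.1 i)
    rw [two_smul, two_smul]; exact zzd6 _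
  · show 2 • ((x.2 i) * (x.2 i)) = 2 • (x.2 i)
    rw [two_smul, two_smul]; exact zzd7 _

lemma amb_fst_two_smul (x : Amb α β) : (2 • x).1 = 0 := by
  funext i
  show 2 • (x.1 i) = 0
  rw [two_smul]; exact zzd8 _

end Basic

section KernelK
variable {α β : ℕ} {S : Set (Bin α β)}

lemma zero_mem_kernelK : (0 : Bin α β) ∈ kernelK S := by
  simp [kernelK]

lemma mem_of_mem_kernelK (h0 : (0 : Bin α β) ∈ S) {x : Bin α β} (hx : x ∈ kernelK S) :
    x ∈ S := by
  have : x + 0 ∈ (fun y => x + y) '' S := Set.mem_image_of_mem _ h0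
  rw [hx] at this
  simpa using this

lemma add_mem_of_mem_kernelK {x s : Bin α β} (hx : x ∈ kernelK S) (hs : s ∈ S) :
    x + s ∈ S := by
  have : x + s ∈ (fun y => x + y) '' S := Set.mem_image_of_mem _ hs
  rwa [hx] at this

lemma mem_kernelK_of_forall {x : Bin α β} (h : ∀ s ∈ S, x + s ∈ S) : x ∈ kernelK S := by
  have hsub : (fun y => x + y) '' S ⊆ S := by
    rintro _ ⟨s, hs, rfl⟩; exact h s hs
  have hcard : S.ncard ≤ ((fun y => x + y) '' S).ncard := by
    rw [Set.ncard_image_of_injective _ (add_right_injective x)]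
  exact Set.eq_of_subset_of_ncard_le hsub hcard (Set.toFinite S)

lemma add_mem_kernelK {x y : Bin α β} (hx : x ∈ kernelK S) (hy : y ∈ kernelK S) :
    x + y ∈ kernelK S := by
  refine mem_kernelK_of_forall fun s hs => ?_
  rw [add_assoc]
  exact add_mem_of_mem_kernelK hx (add_mem_of_mem_kernelK hy hs)

/-- No binary code has a kernel of index exactly `2` in it. -/
lemma no_index_two (h0 : (0 : Bin α β) ∈ S)
    (hcard : S.ncard = 2 * (kernelK S).ncard) : False := by
  have hKS : kernelK S ⊆ S := fun x hx => mem_of_mem_kernelK h0 hx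
  have hKpos : 0 < (kernelK S).ncard :=
    (Set.ncard_pos (Set.toFinite _)).2 ⟨0, zero_mem_kernelK⟩
  have hne : ¬ S ⊆ kernelK S := by
    intro hsub
    have := Set.ncard_le_ncard hsub (Set.toFinite _)
    omega
  obtain ⟨c, hcS, hcK⟩ := Set.not_subset.mp hne
  have hsub2 : kernelK S ∪ (fun y => c + y) '' kernelK S ⊆ S := by
    rintro x (hx | ⟨k, hk, rfl⟩)
    · exact hKS hx
    · have : k + c ∈ S := add_mem_of_mem_kernelK hk hcS
      simpa [add_comm] using this
  have hdisj : Disjoint (kernelK S) ((fun y => c + y) '' kernelK S) := by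
    rw [Set.disjoint_left]
    rintro x hx ⟨k, hk, rfl⟩
    apply hcK
    have h1 : (c + k) + k ∈ kernelK S := add_mem_kernelK hx hk
    rwa [add_assoc, bin_add_self, add_zero] at h1
  have hcards : (kernelK S ∪ (fun y => c + y) '' kernelK S).ncard = S.ncard := by
    rw [Set.ncard_union_eq hdisj (Set.toFinite _) (Set.toFinite _),
      Set.ncard_image_of_injective _ (add_right_injective c), hcard]
    omega
  have hSeq : kernelK S ∪ (fun y => c + y) '' kernelK S = S :=
    Set.eq_of_subset_of_ncard_le hsub2 hcards.ge (Set.toFinite S)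
  apply hcK
  apply mem_kernelK_of_forall
  intro s hs
  rw [← hSeq] at hs
  rcases hs with hk | ⟨k, hk, rfl⟩
  · rw [add_comm]
    exact add_mem_of_mem_kernelK hk hcS
  · have h2 : c + (c + k) = k := by
      rw [← add_assoc, bin_add_self, zero_add]
    rw [h2]
    exact hKS hk

end KernelK

section Subgroups
variable {α β : ℕ}

/-- Doubling as an additive homomorphism. -/
def twoHom : Amb α β →+ Amb α β :=
  AddMonoidHom.mk' (fun x => 2 • x) (fun x y => smul_add 2 x y)

/-- First projection as an additive homomorphism. -/
def fstHom : Amb α β →+ (Fin α → ZMod 2) :=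
  AddMonoidHom.mk' Prod.fst (fun _ _ => rfl)

/-- The subgroup `{0} × {0,2}^β` of order-two elements with zero binary part. -/
def Tgrp : AddSubgroup (Amb α β) := (twoHom.ker) ⊓ (fstHom.ker)

lemma mem_Tgrp {z : Amb α β} : z ∈ (Tgrp : AddSubgroup (Amb α β)) ↔ 2 • z = 0 ∧ z.1 = 0 := by
  simp [Tgrp, AddSubgroup.mem_inf, AddMonoidHom.mem_ker, twoHom, fstHom]

lemma two_smul_mul_mem_Tgrp (x y : Amb α β) : 2 • (x * y) ∈ (Tgrp : AddSubgroup (Amb α β)) := by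
  rw [mem_Tgrp]
  exact ⟨amb_two_two _, amb_fst_two_smul _⟩

variable (C : AddSubgroup (Amb α β))

/-- The preimage under `Φ` of the kernel: `{x ∈ C | ∀ y ∈ C, 2xy ∈ C}`. -/
def Kc : AddSubgroup (Amb α β) where
  carrier := {x | x ∈ C ∧ ∀ y ∈ C, 2 • (x * y) ∈ C}
  zero_mem' := by
    refine ⟨zero_mem C, fun y hy => ?_⟩
    rw [zero_mul, smul_zero]
    exact zero_mem C
  add_mem' := by
    rintro a b ⟨haC, ha⟩ ⟨hbC, hb⟩
    refine ⟨add_mem haC hbC, fun y hy => ?_⟩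
    have : 2 • ((a + b) * y) = 2 • (a * y) + 2 • (b * y) := by
      rw [add_mul, smul_add]
    rw [this]
    exact add_mem (ha y hy) (hb y hy)
  neg_mem' := by
    rintro a ⟨haC, ha⟩
    refine ⟨neg_mem haC, fun y hy => ?_⟩
    rw [neg_mul, smul_neg]
    exact neg_mem (ha y hy)

lemma mem_Kc {x : Amb α β} : x ∈ Kc C ↔ x ∈ C ∧ ∀ y ∈ C, 2 • (x * y) ∈ C := Iff.rfl

lemma Kc_le : Kc C ≤ C := fun _ hx => (mem_Kc C |>.1 hx).1

/-- The subgroup of order-two elements of `C`. -/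
def CbGrp : AddSubgroup (Amb α β) := C ⊓ twoHom.ker

lemma mem_CbGrp {x : Amb α β} : x ∈ CbGrp C ↔ x ∈ C ∧ 2 • x = 0 := by
  simp [CbGrp, AddSubgroup.mem_inf, AddMonoidHom.mem_ker, twoHom]

lemma CbGrp_coe : (CbGrp C : Set (Amb α β)) = {x : Amb α β | x ∈ C ∧ 2 • x = 0} := by
  ext x; exact mem_CbGrp C

lemma CbGrp_le_Kc : CbGrp C ≤ Kc C := by
  intro x hx
  obtain ⟨hxC, hx2⟩ := (mem_CbGrp C).1 hx
  refine (mem_Kc C).2 ⟨hxC, fun y hy => ?_⟩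
  rw [two_smul_mul, hx2, zero_mul]
  exact zero_mem C

/-- The image of `Kc` under `Φ`, as a subgroup of the binary space. -/
def KB : AddSubgroup (Bin α β) where
  carrier := Phi '' (Kc C : Set (Amb α β))
  zero_mem' := ⟨0, zero_mem _, Phi_zero⟩
  add_mem' := by
    rintro _ _ ⟨x, hx, rfl⟩ ⟨y, hy, rfl⟩
    refine ⟨x + y + 2 • (x * y), ?_, (Phi_add x y).symm⟩
    obtain ⟨hxC, hx2⟩ := (mem_Kc C).1 hx
    obtain ⟨hyC, hy2⟩ := (mem_Kc C).1 hy
    have hxyC : x + y + 2 • (x * y) ∈ C :=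
      add_mem (add_mem hxC hyC) (hx2 y hyC)
    refine (mem_Kc C).2 ⟨hxyC, fun z hz => ?_⟩
    have hexp : 2 • ((x + y + 2 • (x * y)) * z)
        = 2 • (x * z) + 2 • (y * z) + (2 • (2 • (x * y))) * z := by
      rw [add_mul, add_mul, smul_add, smul_add, two_smul_mul (2 • (x*y)) z]
    rw [hexp, amb_two_two, zero_mul, add_zero]
    exact add_mem (hx2 z hz) (hy2 z hz)
  neg_mem' := by
    rintro _ ⟨x, hx, rfl⟩
    rw [bin_neg]
    exact ⟨x, hx, rfl⟩

lemma kernelK_Phi_eq : kernelK (Phi '' (C : Set (Amb α β))) = (KB C : Set (Bin α β)) := by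
  ext u
  constructor
  · intro hu
    have h0 : (0 : Bin α β) ∈ Phi '' (C : Set (Amb α β)) := ⟨0, zero_mem C, Phi_zero⟩
    obtain ⟨x, hxC, rfl⟩ := mem_of_mem_kernelK h0 hu
    refine ⟨x, (mem_Kc C).2 ⟨hxC, fun y hy => ?_⟩, rfl⟩
    have h1 : Phi x + Phi y ∈ Phi '' (C : Set (Amb α β)) :=
      add_mem_of_mem_kernelK hu ⟨y, hy, rfl⟩
    rw [Phi_add] at h1
    obtain ⟨z, hzC, hz⟩ := h1
    have hz' : z = x + y + 2 • (x * y) := Phi_inj hz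
    subst hz'
    have : x + y + 2 • (x * y) - (x + y) ∈ C := sub_mem hzC (add_mem hxC hy)
    simpa using this
  · rintro ⟨x, hx, rfl⟩
    obtain ⟨hxC, hx2⟩ := (mem_Kc C).1 hx
    apply mem_kernelK_of_forall
    rintro _ ⟨y, hyC, rfl⟩
    rw [Phi_add]
    exact ⟨x + y + 2 • (x * y), add_mem (add_mem hxC hyC) (hx2 y hyC), rfl⟩

end Subgroups

section Cards

lemma subgroup_ncard {A : Type*} [AddGroup A] (H : AddSubgroup A) :
    Nat.card H = (H : Set A).ncard := by
  rw [← Nat.card_coe_set_eq]; rfl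

lemma card_le_of_le {A : Type*} [AddGroup A] [Fintype A] {H K : AddSubgroup A} (h : H ≤ K) :
    Nat.card H ≤ Nat.card K := by
  rw [subgroup_ncard, subgroup_ncard]
  exact Set.ncard_le_ncard h (Set.toFinite _)

lemma le_of_le_of_card_le {A : Type*} [AddGroup A] [Fintype A] {H K : AddSubgroup A}
    (h : H ≤ K) (hc : Nat.card K ≤ Nat.card H) : K ≤ H := by
  have := Set.eq_of_subset_of_ncard_le (show (H : Set A) ⊆ K from h)
    (by rw [← subgroup_ncard, ← subgroup_ncard]; exact hc) (Set.toFinite _)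
  intro x hx
  have hx' : x ∈ (K : Set A) := hx
  rw [← this] at hx'
  exact hx'

set_option maxHeartbeats 1000000 in
lemma card_subgroup_two_pow {M : Type*} [AddCommGroup M] [Module (ZMod 2) M] [Fintype M]
    (H : AddSubgroup M) :
    Nat.card H = 2 ^ Module.finrank (ZMod 2)
      (Submodule.span (ZMod 2) (H : Set M)) := by
  have h1 : Submodule.span (ZMod 2) (H : Set M) = AddSubgroup.toZModSubmodule 2 H := by
    have := Submodule.span_eq (AddSubgroup.toZModSubmodule 2 H)
    rw [AddSubgroup.coe_toZModSubmodule] at this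
    exact this
  rw [h1]
  haveI : Fintype (AddSubgroup.toZModSubmodule 2 H) := Fintype.ofFinite _
  have h2 : Nat.card H = Fintype.card (AddSubgroup.toZModSubmodule 2 H) := by
    rw [← Nat.card_eq_fintype_card]; rfl
  rw [h2, Module.card_eq_pow_finrank (K := ZMod 2), ZMod.card]

lemma card_eq_card_range_mul_card_ker {G H : Type*} [AddGroup G] [AddGroup H] (f : G →+ H) :
    Nat.card G = Nat.card f.range * Nat.card f.ker := by
  rw [AddSubgroup.card_eq_card_quotient_mul_card_addSubgroup f.ker,
    Nat.card_congr (QuotientAddGroup.quotientKerEquivRange f).toEquiv]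

variable {α β : ℕ} (C : AddSubgroup (Amb α β))

lemma two_pow_kerDim_eq : 2 ^ kerDim (Phi '' (C : Set (Amb α β))) = Nat.card (Kc C) := by
  have h1 : kernelK (Phi '' (C : Set (Amb α β))) = (KB C : Set (Bin α β)) :=
    kernelK_Phi_eq C
  have h2 : Nat.card (KB C) = Nat.card (Kc C) := by
    rw [subgroup_ncard, subgroup_ncard]
    show (Phi '' (Kc C : Set (Amb α β))).ncard = _
    rw [Set.ncard_image_of_injective _ Phi_inj]
  rw [← h2, kerDim, h1, ← card_subgroup_two_pow (KB C)]

end Cards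

section Alternating
variable {A : Type*} [AddCommGroup A] [Fintype A]

lemma zz_ne_zero : ∀ u : ZMod 2, u ≠ 0 → u = 1 := by decide
lemma zz_add_eq_zero : ∀ u v : ZMod 2, u + v = 0 → u = v := by decide
lemma zz_ne_one : ∀ u : ZMod 2, u ≠ 1 → u = 0 := by decide

/-- The radical of a biadditive form `Bf` relative to a subgroup `G`. -/
def radA (Bf : A →+ A →+ ZMod 2) (G : AddSubgroup A) : AddSubgroup A where
  carrier := {x | x ∈ G ∧ ∀ y ∈ G, Bf x y = 0}
  zero_mem' := ⟨zero_mem G, fun y _ => by rw [map_zero]; rfl⟩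
  add_mem' := by
    rintro p q ⟨hpG, hp⟩ ⟨hqG, hq⟩
    exact ⟨add_mem hpG hqG, fun y hy => by
      rw [map_add, AddMonoidHom.add_apply, hp y hy, hq y hy, add_zero]⟩
  neg_mem' := by
    rintro p ⟨hpG, hp⟩
    exact ⟨neg_mem hpG, fun y hy => by
      rw [map_neg, AddMonoidHom.neg_apply, hp y hy, neg_zero]⟩

lemma mem_radA {Bf : A →+ A →+ ZMod 2} {G : AddSubgroup A} {x : A} :
    x ∈ radA Bf G ↔ x ∈ G ∧ ∀ y ∈ G, Bf x y = 0 := Iff.rfl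

lemma bf_symm {Bf : A →+ A →+ ZMod 2} {G : AddSubgroup A}
    (halt : ∀ x ∈ G, Bf x x = 0) {x y : A} (hx : x ∈ G) (hy : y ∈ G) :
    Bf x y = Bf y x := by
  have h := halt (x + y) (add_mem hx hy)
  rw [map_add Bf x y, AddMonoidHom.add_apply, map_add (Bf x), map_add (Bf y),
    halt x hx, halt y hy, zero_add, add_zero] at h
  exact zz_add_eq_zero _ _ h

lemma alt_card_aux (Bf : A →+ A →+ ZMod 2) :
    ∀ n : ℕ, ∀ G : AddSubgroup A, Nat.card G ≤ n → (∀ x ∈ G, Bf x x = 0) →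
      ∃ m : ℕ, Nat.card G = 4 ^ m * Nat.card (radA Bf G) := by
  intro n
  induction n with
  | zero =>
    intro G hG _
    haveI : Nonempty G := ⟨⟨0, zero_mem G⟩⟩
    have : 0 < Nat.card G := Nat.card_pos
    omega
  | succ n ih =>
    intro G hG halt
    by_cases hdeg : ∀ x ∈ G, ∀ y ∈ G, Bf x y = 0
    · refine ⟨0, ?_⟩
      have hr : radA Bf G = G := by
        ext x
        exact ⟨fun hx => hx.1, fun hx => ⟨hx, fun y hy => hdeg x hx y hy⟩⟩
      rw [hr, pow_zero, one_mul]
    · push_neg at hdeg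
      obtain ⟨a, haG, b, hbG, hab⟩ := hdeg
      have hab1 : Bf a b = 1 := zz_ne_zero _ hab
      have hba1 : Bf b a = 1 := by rw [← bf_symm halt haG hbG]; exact hab1
      have haa : Bf a a = 0 := halt a haG
      have hbb : Bf b b = 0 := halt b hbG
      set φ : A →+ ZMod 2 × ZMod 2 := (Bf a).prod (Bf b) with hphi
      set G' : AddSubgroup A := G ⊓ φ.ker with hGp
      have hG'le : G' ≤ G := inf_le_left
      have hG'mem : ∀ x : A, x ∈ G' ↔ x ∈ G ∧ Bf a x = 0 ∧ Bf b x = 0 := by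
        intro x
        simp [hGp, hphi, AddSubgroup.mem_inf, AddMonoidHom.mem_ker,
          AddMonoidHom.prod_apply, Prod.ext_iff]
      -- decomposition of an arbitrary element of G
      have hdec : ∀ g ∈ G, ∃ g' ∈ G', ∃ u v : A,
          (u = a ∨ u = 0) ∧ (v = b ∨ v = 0) ∧ g = g' + u + v := by
        intro g hg
        by_cases h1 : Bf a g = 1 <;> by_cases h2 : Bf b g = 1
        · refine ⟨g - a - b, ?_, a, b, Or.inl rfl, Or.inl rfl, by abel⟩
          refine (hG'mem _).2 ⟨by exact sub_mem (sub_mem hg haG) hbG, ?_, ?_⟩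
          · rw [map_sub, map_sub, haa, hab1, h1]; decide
          · rw [map_sub, map_sub, hba1, hbb, h2]; decide
        · have h2' : Bf b g = 0 := zz_ne_one _ h2
          refine ⟨g - b, ?_, 0, b, Or.inr rfl, Or.inl rfl, by abel⟩
          refine (hG'mem _).2 ⟨sub_mem hg hbG, ?_, ?_⟩
          · rw [map_sub, hab1, h1]; decide
          · rw [map_sub, hbb, h2', sub_zero]
        · have h1' : Bf a g = 0 := zz_ne_one _ h1
          refine ⟨g - a, ?_, a, 0, Or.inl rfl, Or.inr rfl, by abel⟩
          refine (hG'mem _).2 ⟨sub_mem hg haG, ?_, ?_⟩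
          · rw [map_sub, haa, h1', sub_zero]
          · rw [map_sub, hba1, h2]; decide
        · have h1' : Bf a g = 0 := zz_ne_one _ h1
          have h2' : Bf b g = 0 := zz_ne_one _ h2
          exact ⟨g, (hG'mem _).2 ⟨hg, h1', h2'⟩, 0, 0, Or.inr rfl, Or.inr rfl, by abel⟩
      -- the radical does not change when passing to G'
      have hradeq : radA Bf G' = radA Bf G := by
        apply le_antisymm
        · rintro x ⟨hxG', hxrad⟩
          obtain ⟨hxG, hax, hbx⟩ := (hG'mem _).1 hxG'
          refine ⟨hxG, fun g hg => ?_⟩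
          obtain ⟨g', hg'G', u, v, hu, hv, rfl⟩ := hdec g hg
          have hxu : Bf x u = 0 := by
            rcases hu with rfl | rfl
            · rw [bf_symm halt hxG haG]; exact hax
            · exact map_zero (Bf x)
          have hxv : Bf x v = 0 := by
            rcases hv with rfl | rfl
            · rw [bf_symm halt hxG hbG]; exact hbx
            · exact map_zero (Bf x)
          rw [map_add, map_add, hxrad g' hg'G', hxu, hxv, add_zero, add_zero]
        · rintro x ⟨hxG, hxrad⟩
          refine ⟨(hG'mem _).2 ⟨hxG, ?_, ?_⟩, fun y hy => hxrad y (hG'le hy)⟩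
          · rw [bf_symm halt haG hxG]; exact hxrad a haG
          · rw [bf_symm halt hbG hxG]; exact hxrad b hbG
      -- cardinality: G has index 4 over G'
      set ψ : G →+ ZMod 2 × ZMod 2 := φ.comp G.subtype with hpsi
      have hψapp : ∀ x : G, ψ x = (Bf a x.1, Bf b x.1) := fun x => rfl
      have hsurj : Function.Surjective ψ := by
        intro z
        have hz : z = (0,0) ∨ z = (0,1) ∨ z = (1,0) ∨ z = (1,1) := by
          revert z; decide
        rcases hz with rfl | rfl | rfl | rfl
        · exact ⟨0, by rw [map_zero]; rfl⟩
        · refine ⟨⟨a, haG⟩, ?_⟩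
          rw [hψapp]
          show (Bf a a, Bf b a) = (0, 1)
          rw [haa, hba1]
        · refine ⟨⟨b, hbG⟩, ?_⟩
          rw [hψapp]
          show (Bf a b, Bf b b) = (1, 0)
          rw [hab1, hbb]
        · refine ⟨⟨a + b, add_mem haG hbG⟩, ?_⟩
          rw [hψapp]
          show (Bf a (a + b), Bf b (a + b)) = (1, 1)
          rw [map_add, map_add, haa, hab1, hba1, hbb, zero_add, add_zero]
      have hrange : Nat.card ψ.range = 4 := by
        rw [AddMonoidHom.range_eq_top.2 hsurj, AddSubgroup.card_top, Nat.card_prod,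
          Nat.card_zmod]
      have hkerequiv : Nat.card ψ.ker = Nat.card G' := by
        apply Nat.card_congr
        refine ⟨fun x => ⟨x.1.1, ?_⟩, fun y => ⟨⟨y.1, ((hG'mem _).1 y.2).1⟩, ?_⟩, ?_, ?_⟩
        · have hx2 := x.2
          rw [AddMonoidHom.mem_ker, hψapp, Prod.ext_iff] at hx2
          exact (hG'mem _).2 ⟨x.1.2, hx2.1, hx2.2⟩
        · obtain ⟨hyG, hy1, hy2⟩ := (hG'mem _).1 y.2
          rw [AddMonoidHom.mem_ker, hψapp, Prod.ext_iff]
          exact ⟨hy1, hy2⟩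
        · intro x; apply Subtype.ext; apply Subtype.ext; rfl
        · intro y; apply Subtype.ext; rfl
      have hcard4 : Nat.card G = 4 * Nat.card G' := by
        rw [card_eq_card_range_mul_card_ker ψ, hrange, hkerequiv]
      haveI : Nonempty G' := ⟨⟨0, zero_mem G'⟩⟩
      have hpos : 0 < Nat.card G' := Nat.card_pos
      have hle : Nat.card G' ≤ n := by omega
      obtain ⟨m, hm⟩ := ih G' hle (fun x hx => halt x (hG'le hx))
      refine ⟨m + 1, ?_⟩
      rw [hcard4, hm, hradeq, pow_succ]
      ring

end Alternating

section TCard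

def g24 (v : ZMod 2) : ZMod 4 := if v = 0 then 0 else 2
lemma g24_inj : ∀ v w : ZMod 2, g24 v = g24 w → v = w := by decide
lemma g24_two : ∀ v : ZMod 2, g24 v + g24 v = 0 := by decide
lemma g24_surj : ∀ c : ZMod 4, c + c = 0 → g24 (if c = 0 then 0 else 1) = c := by decide

variable {α β : ℕ}

lemma card_Tgrp : Nat.card (Tgrp : AddSubgroup (Amb α β)) = 2 ^ β := by
  have hmem : ∀ v : Fin β → ZMod 2,
      ((0, fun i => g24 (v i)) : Amb α β) ∈ (Tgrp : AddSubgroup (Amb α β)) := by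
    intro v
    rw [mem_Tgrp]
    constructor
    · refine Prod.ext ?_ (funext fun i => ?_)
      · show 2 • (0 : Fin α → ZMod 2) = 0
        rw [smul_zero]
      · show 2 • g24 (v i) = 0
        rw [two_smul]; exact g24_two _
    · rfl
  let j : (Fin β → ZMod 2) → (Tgrp : AddSubgroup (Amb α β)) :=
    fun v => ⟨(0, fun i => g24 (v i)), hmem v⟩
  have hbij : Function.Bijective j := by
    constructor
    · intro v w hvw
      have := congrArg (fun z : (Tgrp : AddSubgroup (Amb α β)) => (z : Amb α β).2) hvw
      funext i
      exact g24_inj _ _ (congrFun this i)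
    · rintro ⟨z, hz⟩
      rw [mem_Tgrp] at hz
      obtain ⟨hz2, hz1⟩ := hz
      refine ⟨fun i => if z.2 i = 0 then 0 else 1, ?_⟩
      apply Subtype.ext
      refine Prod.ext hz1.symm (funext fun i => ?_)
      show g24 (if z.2 i = 0 then 0 else 1) = z.2 i
      apply g24_surj
      have := congrFun (congrArg Prod.snd hz2) i
      rw [← two_smul (ℕ) (z.2 i)]
      exact this
  rw [← Nat.card_eq_of_bijective j hbij, Nat.card_eq_fintype_card, Fintype.card_fun,
    ZMod.card, Fintype.card_fin]

end TCard

section TypeFacts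
variable {α β : ℕ} (C : AddSubgroup (Amb α β))

def DG : AddSubgroup (Amb α β) := C ⊓ Tgrp

lemma mem_DG {x : Amb α β} : x ∈ DG C ↔ x ∈ C ∧ 2 • x = 0 ∧ x.1 = 0 := by
  simp [DG, AddSubgroup.mem_inf, mem_Tgrp, and_assoc]

lemma DG_le_C : DG C ≤ C := inf_le_left
lemma DG_le_T : DG C ≤ (Tgrp : AddSubgroup (Amb α β)) := inf_le_right

lemma card_CbGrp_eq {γ δ : ℕ}
    (h2 : Nat.card {x : Amb α β | x ∈ C ∧ 2 • x = 0} = 2 ^ (γ + δ)) :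
    Nat.card (CbGrp C) = 2 ^ (γ + δ) := by
  rw [subgroup_ncard, CbGrp_coe, ← Nat.card_coe_set_eq]
  exact h2

lemma card_range_p {κ : ℕ} (h3 : Module.finrank (ZMod 2)
      (Submodule.span (ZMod 2) (Prod.fst '' {x : Amb α β | x ∈ C ∧ 2 • x = 0})) = κ) :
    Nat.card ((fstHom.comp (CbGrp C).subtype).range) = 2 ^ κ := by
  have hset : (((fstHom.comp (CbGrp C).subtype).range : AddSubgroup (Fin α → ZMod 2)) :
      Set (Fin α → ZMod 2)) = Prod.fst '' {x : Amb α β | x ∈ C ∧ 2 • x = 0} := by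
    ext u
    constructor
    · rintro ⟨⟨x, hx⟩, rfl⟩
      exact ⟨x, (mem_CbGrp C).1 hx, rfl⟩
    · rintro ⟨x, hx, rfl⟩
      exact ⟨⟨x, (mem_CbGrp C).2 hx⟩, rfl⟩
  rw [card_subgroup_two_pow, hset, h3]

lemma card_ker_p :
    Nat.card ((fstHom.comp (CbGrp C).subtype).ker) = Nat.card (DG C) := by
  apply Nat.card_congr
  refine ⟨fun x => ⟨x.1.1, ?_⟩, fun y => ⟨⟨y.1, ?_⟩, ?_⟩, ?_, ?_⟩
  · obtain ⟨hxC, hx2⟩ := (mem_CbGrp C).1 x.1.2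
    have hx1 : (x.1.1 : Amb α β).1 = 0 := x.2
    exact (mem_DG C).2 ⟨hxC, hx2, hx1⟩
  · obtain ⟨ha, hb, hc⟩ := (mem_DG C).1 y.2
    exact (mem_CbGrp C).2 ⟨ha, hb⟩
  · obtain ⟨ha, hb, hc⟩ := (mem_DG C).1 y.2
    exact hc
  · intro x; apply Subtype.ext; apply Subtype.ext; rfl
  · intro y; apply Subtype.ext; rfl

lemma card_ker_q :
    Nat.card ((twoHom.comp C.subtype).ker) = Nat.card (CbGrp C) := by
  apply Nat.card_congr
  refine ⟨fun x => ⟨x.1.1, ?_⟩, fun y => ⟨⟨y.1, ?_⟩, ?_⟩, ?_, ?_⟩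
  · exact (mem_CbGrp C).2 ⟨x.1.2, x.2⟩
  · exact ((mem_CbGrp C).1 y.2).1
  · exact ((mem_CbGrp C).1 y.2).2
  · intro x; apply Subtype.ext; apply Subtype.ext; rfl
  · intro y; apply Subtype.ext; rfl

lemma range_q_le : (twoHom.comp C.subtype).range ≤ DG C := by
  rintro _ ⟨x, rfl⟩
  have hx : ((twoHom.comp C.subtype) x : Amb α β) = 2 • (x : Amb α β) := rfl
  rw [hx, mem_DG]
  refine ⟨?_, amb_two_two _, amb_fst_two_smul _⟩
  rw [two_smul]
  exact add_mem x.2 x.2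

lemma master {γ δ κ : ℕ}
    (h1 : Nat.card C = 2 ^ (γ + 2 * δ))
    (h2 : Nat.card {x : Amb α β | x ∈ C ∧ 2 • x = 0} = 2 ^ (γ + δ))
    (h3 : Module.finrank (ZMod 2)
      (Submodule.span (ZMod 2) (Prod.fst '' {x : Amb α β | x ∈ C ∧ 2 • x = 0})) = κ) :
    ∃ j : ℕ, Nat.card (DG C) = 2 ^ j ∧ j + κ = γ + δ ∧ δ ≤ j ∧ j ≤ β := by
  have hCb := card_CbGrp_eq C h2
  have hrp := card_range_p C h3
  have e1 : 2 ^ (γ + δ) = 2 ^ κ * Nat.card (DG C) := by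
    rw [← hCb, card_eq_card_range_mul_card_ker (fstHom.comp (CbGrp C).subtype), hrp,
      card_ker_p C]
  have hdvd : Nat.card (DG C) ∣ 2 ^ (γ + δ) := ⟨2 ^ κ, by rw [e1]; ring⟩
  obtain ⟨j, hjle, hj⟩ := (Nat.dvd_prime_pow Nat.prime_two).1 hdvd
  have hjκ : j + κ = γ + δ := by
    apply Nat.pow_right_injective (le_refl 2)
    show (2:ℕ) ^ (j + κ) = 2 ^ (γ + δ)
    rw [pow_add, ← hj, e1]
    ring
  refine ⟨j, hj, hjκ, ?_, ?_⟩
  · have hq := card_eq_card_range_mul_card_ker (twoHom.comp C.subtype)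
    rw [h1, card_ker_q C, hCb] at hq
    have hrange : Nat.card ((twoHom.comp C.subtype).range) = 2 ^ δ := by
      have hpos : 0 < (2 : ℕ) ^ (γ + δ) := pow_pos two_pos _
      apply Nat.eq_of_mul_eq_mul_right hpos
      rw [← hq, ← pow_add]
      congr 1
      ring
    have hle : Nat.card ((twoHom.comp C.subtype).range) ≤ Nat.card (DG C) :=
      card_le_of_le (range_q_le C)
    rw [hrange, hj] at hle
    exact (Nat.pow_le_pow_iff_right (le_refl 2)).1 hle
  · have hle := card_le_of_le (DG_le_T (α := α) (β := β) C)
    rw [hj, card_Tgrp] at hle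
    exact (Nat.pow_le_pow_iff_right (le_refl 2)).1 hle

end TypeFacts

section SOne
variable {α β : ℕ} (C : AddSubgroup (Amb α β))

lemma zz_sum11 : (1 : ZMod 2) + 1 = 0 := by decide
lemma zz_one_ne_zero : (1 : ZMod 2) ≠ 0 := by decide

set_option maxHeartbeats 1000000 in
lemma sone (hT2 : Nat.card (Tgrp : AddSubgroup (Amb α β)) = 2 * Nat.card (DG C)) :
    ∃ m : ℕ, Nat.card C = 4 ^ m * Nat.card (Kc C) := by
  classical
  haveI : Nonempty (DG C) := ⟨⟨0, zero_mem _⟩⟩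
  have hDpos : 0 < Nat.card (DG C) := Nat.card_pos
  have hnotsub : ¬ (((Tgrp : AddSubgroup (Amb α β)) : Set (Amb α β)) ⊆ (DG C : Set (Amb α β))) := by
    intro hsub
    have hle := Set.ncard_le_ncard hsub (Set.toFinite _)
    rw [← subgroup_ncard, ← subgroup_ncard] at hle
    omega
  obtain ⟨t₀, ht₀T, ht₀D⟩ := Set.not_subset.mp hnotsub
  have ht₀T' : t₀ ∈ (Tgrp : AddSubgroup (Amb α β)) := ht₀T
  have ht₀D' : t₀ ∉ DG C := ht₀D
  have ht2 : t₀ + t₀ = 0 := by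
    have := (mem_Tgrp.1 ht₀T').1
    rwa [two_smul] at this
  -- the coset property
  have hcos : ∀ u, u ∈ (Tgrp : AddSubgroup (Amb α β)) → u ∉ DG C → u + t₀ ∈ DG C := by
    intro u huT huD
    by_contra hnot
    set A1 : Set (Amb α β) := (DG C : Set (Amb α β)) with hA1
    set A2 := (fun z => u + z) '' A1 with hA2
    set A3 := (fun z => t₀ + z) '' A1 with hA3
    have hc1 : A1.ncard = Nat.card (DG C) := (subgroup_ncard _).symm
    have hc2 : A2.ncard = Nat.card (DG C) := by
      rw [hA2, Set.ncard_image_of_injective _ (add_right_injective u), hc1]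
    have hc3 : A3.ncard = Nat.card (DG C) := by
      rw [hA3, Set.ncard_image_of_injective _ (add_right_injective t₀), hc1]
    have hd12 : Disjoint A1 A2 := by
      rw [Set.disjoint_left]
      rintro x hx ⟨d, hd, rfl⟩
      apply huD
      have h : (u + d) - d ∈ DG C := sub_mem hx hd
      simpa using h
    have hd13 : Disjoint A1 A3 := by
      rw [Set.disjoint_left]
      rintro x hx ⟨d, hd, rfl⟩
      apply ht₀D'
      have h : (t₀ + d) - d ∈ DG C := sub_mem hx hd
      simpa using h
    have hd23 : Disjoint A2 A3 := by
      rw [Set.disjoint_left]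
      rintro x ⟨d, hd, rfl⟩ ⟨d', hd', hdd⟩
      apply hnot
      have h6 : u = t₀ + d' - d := by
        rw [eq_sub_iff_add_eq]
        simpa using hdd.symm
      have h5 : u + t₀ = d' - d + (t₀ + t₀) := by rw [h6]; abel
      rw [ht2, add_zero] at h5
      rw [h5]
      exact sub_mem hd' hd
    have hsubT : A1 ∪ A2 ∪ A3 ⊆ ((Tgrp : AddSubgroup (Amb α β)) : Set (Amb α β)) := by
      rintro x ((hx | ⟨d, hd, rfl⟩) | ⟨d, hd, rfl⟩)
      · exact DG_le_T C hx
      · exact add_mem huT (DG_le_T C hd)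
      · exact add_mem ht₀T' (DG_le_T C hd)
    have hu12 : (A1 ∪ A2).ncard = 2 * Nat.card (DG C) := by
      rw [Set.ncard_union_eq hd12 (Set.toFinite _) (Set.toFinite _), hc1, hc2]
      omega
    have hu123 : (A1 ∪ A2 ∪ A3).ncard = 3 * Nat.card (DG C) := by
      rw [Set.ncard_union_eq (Set.disjoint_union_left.2 ⟨hd13, hd23⟩)
        (Set.toFinite _) (Set.toFinite _), hu12, hc3]
      omega
    have hfin := Set.ncard_le_ncard hsubT (Set.toFinite _)
    rw [hu123, ← subgroup_ncard, hT2] at hfin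
    omega
  -- the indicator function of the complement of `DG C`
  let F : Amb α β → ZMod 2 := fun z => if z ∈ DG C then 0 else 1
  have hF1 : ∀ z, z ∈ DG C → F z = 0 := fun z hz => if_pos hz
  have hF2 : ∀ z, z ∉ DG C → F z = 1 := fun z hz => if_neg hz
  have hF0 : ∀ z, F z = 0 → z ∈ DG C := by
    intro z hz
    by_contra hnz
    rw [hF2 z hnz] at hz
    exact zz_one_ne_zero hz
  have hFadd : ∀ u ∈ (Tgrp : AddSubgroup (Amb α β)), ∀ v ∈ (Tgrp : AddSubgroup (Amb α β)),
      F (u + v) = F u + F v := by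
    intro u hu v hv
    by_cases h1 : u ∈ DG C <;> by_cases h2 : v ∈ DG C
    · rw [hF1 u h1, hF1 v h2, hF1 _ (add_mem h1 h2), add_zero]
    · have h12 : u + v ∉ DG C := by
        intro hh
        apply h2
        have h : (u + v) - u ∈ DG C := sub_mem hh h1
        simpa using h
      rw [hF1 u h1, hF2 v h2, hF2 _ h12, zero_add]
    · have h12 : u + v ∉ DG C := by
        intro hh
        apply h1
        have h : (u + v) - v ∈ DG C := sub_mem hh h2
        simpa using h
      rw [hF2 u h1, hF1 v h2, hF2 _ h12, add_zero]
    · have hu' := hcos u hu h1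
      have hv' := hcos v hv h2
      have h12 : u + v ∈ DG C := by
        have hs := add_mem hu' hv'
        have heq : (u + t₀) + (v + t₀) = u + v + (t₀ + t₀) := by abel
        rw [heq, ht2, add_zero] at hs
        exact hs
      rw [hF1 _ h12, hF2 u h1, hF2 v h2, zz_sum11]
  -- the alternating form
  let Bf : Amb α β →+ (Amb α β →+ ZMod 2) := AddMonoidHom.mk'
    (fun x => AddMonoidHom.mk' (fun y => F (2 • (x * y))) (by
      intro y z
      show F (2 • (x * (y + z))) = F (2 • (x * y)) + F (2 • (x * z))
      have h : 2 • (x * (y + z)) = 2 • (x * y) + 2 • (x * z) := by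
        rw [mul_add, smul_add]
      rw [h]
      exact hFadd _ (two_smul_mul_mem_Tgrp _ _) _ (two_smul_mul_mem_Tgrp _ _)))
    (by
      intro x z
      apply AddMonoidHom.ext
      intro y
      show F (2 • ((x + z) * y)) = F (2 • (x * y)) + F (2 • (z * y))
      have h : 2 • ((x + z) * y) = 2 • (x * y) + 2 • (z * y) := by
        rw [add_mul, smul_add]
      rw [h]
      exact hFadd _ (two_smul_mul_mem_Tgrp _ _) _ (two_smul_mul_mem_Tgrp _ _))
  have halt : ∀ x ∈ C, Bf x x = 0 := by
    intro x hx
    show F (2 • (x * x)) = 0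
    rw [two_smul_mul_self]
    apply hF1
    rw [mem_DG]
    refine ⟨?_, amb_two_two x, amb_fst_two_smul x⟩
    rw [two_smul]
    exact add_mem hx hx
  have hrad : radA Bf C = Kc C := by
    ext x
    rw [mem_radA, mem_Kc]
    constructor
    · rintro ⟨hxC, hx⟩
      refine ⟨hxC, fun y hy => ?_⟩
      have h := hF0 _ (hx y hy)
      exact ((mem_DG C).1 h).1
    · rintro ⟨hxC, hx⟩
      refine ⟨hxC, fun y hy => ?_⟩
      show F (2 • (x * y)) = 0
      apply hF1
      have hT := mem_Tgrp.1 (two_smul_mul_mem_Tgrp x y)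
      rw [mem_DG]
      exact ⟨hx y hy, hT.1, hT.2⟩
  obtain ⟨m, hm⟩ := alt_card_aux Bf (Nat.card C) C le_rfl halt
  rw [hrad] at hm
  exact ⟨m, hm⟩

end SOne

/-- kernel dimensions depending on `s = β−(γ−κ)−δ`. -/
theorem kernel_dim_range_refined (α β γ δ κ : ℕ) (C : AddSubgroup (Amb α β))
    (h : IsTypeOf α β γ δ κ C) :
    (β - (γ - κ) - δ = 0 → kerDim (Phi '' (C : Set (Amb α β))) = γ + 2 * δ) ∧
    (β - (γ - κ) - δ = 1 →
      ∃ kb : ℕ, Even kb ∧ kb ≤ 2 * (δ / 2) ∧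
        kerDim (Phi '' (C : Set (Amb α β))) + kb = γ + 2 * δ) ∧
    (2 ≤ β - (γ - κ) - δ →
      (γ + δ ≤ kerDim (Phi '' (C : Set (Amb α β))) ∧
          kerDim (Phi '' (C : Set (Amb α β))) + 2 ≤ γ + 2 * δ) ∨
        kerDim (Phi '' (C : Set (Amb α β))) = γ + 2 * δ) := by
  obtain ⟨h1, h2, h3⟩ := h
  obtain ⟨j, hDj, hjκ, hδj, hjβ⟩ := master C h1 h2 h3
  set kd := kerDim (Phi '' (C : Set (Amb α β))) with hkddef
  have hKc : 2 ^ kd = Nat.card (Kc C) := two_pow_kerDim_eq C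
  have hCb := card_CbGrp_eq C h2
  have hlow : (2:ℕ) ^ (γ + δ) ≤ 2 ^ kd := by
    rw [hKc, ← hCb]; exact card_le_of_le (CbGrp_le_Kc C)
  have hhigh : (2:ℕ) ^ kd ≤ 2 ^ (γ + 2 * δ) := by
    rw [hKc, ← h1]; exact card_le_of_le (Kc_le C)
  have hlow' : γ + δ ≤ kd := (Nat.pow_le_pow_iff_right (le_refl 2)).1 hlow
  have hhigh' : kd ≤ γ + 2 * δ := (Nat.pow_le_pow_iff_right (le_refl 2)).1 hhigh
  have hκγ : κ ≤ γ := by omega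
  refine ⟨?_, ?_, ?_⟩
  · -- s = 0
    intro hs
    have hjeqβ : j = β := by omega
    have hTD : (Tgrp : AddSubgroup (Amb α β)) ≤ DG C := by
      apply le_of_le_of_card_le (DG_le_T C)
      rw [card_Tgrp, hDj, hjeqβ]
    have hCKc : C ≤ Kc C := by
      intro x hx
      refine (mem_Kc C).2 ⟨hx, fun y hy => ?_⟩
      exact DG_le_C C (hTD (two_smul_mul_mem_Tgrp x y))
    have hKcC : Nat.card (Kc C) = 2 ^ (γ + 2 * δ) := by
      rw [← h1]
      have hKCeq : Kc C = C := le_antisymm (Kc_le C) hCKc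
      rw [hKCeq]
    apply Nat.pow_right_injective (le_refl 2)
    show (2:ℕ) ^ kd = 2 ^ (γ + 2 * δ)
    rw [hKc, hKcC]
  · -- s = 1
    intro hs
    have hjβ1 : j + 1 = β := by omega
    have hT2 : Nat.card (Tgrp : AddSubgroup (Amb α β)) = 2 * Nat.card (DG C) := by
      rw [card_Tgrp, hDj, ← hjβ1, pow_succ]
      ring
    obtain ⟨m, hm⟩ := sone C hT2
    rw [h1, ← hKc] at hm
    have hexp : γ + 2 * δ = 2 * m + kd := by
      apply Nat.pow_right_injective (le_refl 2)
      show (2:ℕ) ^ (γ + 2 * δ) = 2 ^ (2 * m + kd)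
      rw [hm, pow_add, pow_mul]
      norm_num
    exact ⟨2 * m, ⟨m, by omega⟩, by omega, by omega⟩
  · -- s ≥ 2
    intro _
    by_cases hkd2 : kd = γ + 2 * δ
    · exact Or.inr hkd2
    · left
      refine ⟨hlow', ?_⟩
      by_contra hcon
      apply no_index_two (S := Phi '' (C : Set (Amb α β))) ⟨0, zero_mem C, Phi_zero⟩
      have hS : (Phi '' (C : Set (Amb α β))).ncard = 2 ^ (γ + 2 * δ) := by
        rw [Set.ncard_image_of_injective _ Phi_inj, ← subgroup_ncard, h1]
      have hKBc : Nat.card (KB C) = Nat.card (Kc C) := by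
        rw [subgroup_ncard, subgroup_ncard]
        show (Phi '' (Kc C : Set (Amb α β))).ncard = _
        rw [Set.ncard_image_of_injective _ Phi_inj]
      have hKset : (kernelK (Phi '' (C : Set (Amb α β)))).ncard = 2 ^ kd := by
        rw [kernelK_Phi_eq C, ← subgroup_ncard, hKBc, ← hKc]
      rw [hS, hKset]
      have hsucc : γ + 2 * δ = kd + 1 := by omega
      rw [hsucc, pow_succ]
      ring
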